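/- Let (μ, W) be a matrix weight with μ ≠ 0. Then 𝒜 is *-invariant (i.e., for every T ∈ 𝒜 also T* ∈ 𝒜) if and only if 𝒜 = A_h, i.e., if and only if for every T ∈ M_N(ℂ): T W(x) = W(x) T* for μ-almost every x ⟺ (T = T* and T W(x) = W(x) T for μ-almost every x). -/

import Mathlib

open Matrix MeasureTheory ComplexOrder

/-- A positive semidefinite complex matrix with zero trace is zero. -/
lemma psd_trace_eq_zero_imp {n : Type*} [Fintype n] [DecidableEq n]
    {A : Matrix n n ℂ} (hA : A.PosSemidef) (h : A.trace = 0) : A = 0 := by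
  obtain ⟨B, rfl⟩ : ∃ B : Matrix n n ℂ, A = Bᴴ * B := by
    open scoped MatrixOrder in
    obtain ⟨B, hB⟩ := CStarAlgebra.nonneg_iff_eq_star_mul_self.mp hA.nonneg
    exact ⟨B, hB⟩
  suffices hB : B = 0 by simp [hB]
  have hdiag : ∀ i, (Bᴴ * B) i i = star (fun j => B j i) ⬝ᵥ (fun j => B j i) := by
    intro i
    simp [Matrix.mul_apply, dotProduct, Matrix.conjTranspose_apply]
  rw [Matrix.trace] at h
  have key := (Finset.sum_eq_zero_iff_of_nonneg (fun i _ => by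
    rw [Matrix.diag_apply, hdiag]
    exact Fintype.sum_nonneg fun j => star_mul_self_nonneg _)).mp h
  ext i j
  have hj := key j (Finset.mem_univ j)
  rw [Matrix.diag_apply, hdiag] at hj
  exact congrFun (dotProduct_star_self_eq_zero.mp hj) i

/-- If `S` is skew-Hermitian, `Wx` is positive definite and `S Wx = Wx Sᴴ`, then `S = 0`. -/
lemma skew_herm_eq_zero {n : Type*} [Fintype n] [DecidableEq n]
    {S Wx : Matrix n n ℂ} (hW : Wx.PosDef) (hS : Sᴴ = -S)
    (h : S * Wx = Wx * Sᴴ) : S = 0 := by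
  obtain ⟨M, hMdef⟩ : ∃ M, M = S * Wx := ⟨_, rfl⟩
  have hWH : Wxᴴ = Wx := hW.isHermitian.eq
  have hM' : M = -(Wx * S) := by rw [hMdef, h, hS, Matrix.mul_neg]
  have hMH : Mᴴ = M := by
    rw [hMdef, conjTranspose_mul, hWH, hS, Matrix.mul_neg, ← hM', hMdef]
  have hanti : M * Wx = -(Wx * M) := by
    conv_lhs => rw [hM']
    rw [Matrix.neg_mul, Matrix.mul_assoc, ← hMdef]
  have e1 : (M * Wx * M).trace = (Wx * (M * M)).trace := by
    rw [trace_mul_comm, ← Matrix.mul_assoc, trace_mul_comm]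
  have e2 : M * Wx * M = -(Wx * (M * M)) := by
    rw [hanti, Matrix.neg_mul, Matrix.mul_assoc]
  have htr0 : (Wx * (M * M)).trace = 0 := by
    have h2 : -(Wx * (M * M)).trace = (Wx * (M * M)).trace := by
      rw [← trace_neg, ← e2, e1]
    linear_combination -h2 / 2
  have htr : (Mᴴ * Wx * M).trace = 0 := by rw [hMH, e1, htr0]
  have hpsd : (Mᴴ * Wx * M).PosSemidef := hW.posSemidef.conjTranspose_mul_mul_same M
  have hz : Mᴴ * Wx * M = 0 := psd_trace_eq_zero_imp hpsd htr
  -- write Wx = Bᴴ * B and conclude M = 0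
  obtain ⟨B, hB⟩ : ∃ B : Matrix n n ℂ, Wx = Bᴴ * B := by
    open scoped MatrixOrder in
    obtain ⟨B, hB⟩ := CStarAlgebra.nonneg_iff_eq_star_mul_self.mp hW.posSemidef.nonneg
    exact ⟨B, hB⟩
  have hBM : B * M = 0 := by
    have h3 : (B * M)ᴴ * (B * M) = 0 := by
      rw [conjTranspose_mul, ← Matrix.mul_assoc, Matrix.mul_assoc Mᴴ, ← hB]
      exact hz
    exact Matrix.conjTranspose_mul_self_eq_zero.mp h3
  have hBdet : IsUnit B.det := by
    have hWdet : Wx.det ≠ 0 := hW.det_pos.ne'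
    rw [hB, Matrix.det_mul] at hWdet
    exact (IsUnit.mk0 _ (right_ne_zero_of_mul hWdet))
  have hM0 : M = 0 := by
    letI := (Matrix.isUnit_iff_isUnit_det B).mpr hBdet |>.invertible
    calc M = B⁻¹ * (B * M) := by
            rw [← Matrix.mul_assoc, Matrix.inv_mul_of_invertible, Matrix.one_mul]
      _ = 0 := by rw [hBM, Matrix.mul_zero]
  letI := hW.isUnit.invertible
  calc S = (S * Wx) * Wx⁻¹ := by
          rw [Matrix.mul_assoc, Matrix.mul_inv_of_invertible, Matrix.mul_one]
    _ = 0 := by rw [← hMdef, hM0, Matrix.zero_mul]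

/-- For a matrix weight `(μ, W)` with `μ ≠ 0`: `𝒜` is `*`-invariant if and only if
`𝒜 = A_h`. -/
theorem A_star_invariant_iff_eq_Ah (N : ℕ) (hN : 1 ≤ N)
    (μ : Measure ℝ) [SigmaFinite μ] (hμ : μ ≠ 0)
    (W : ℝ → Matrix (Fin N) (Fin N) ℂ)
    (hWmeas : ∀ i j, Measurable fun x => W x i j)
    (hWpos : ∀ᵐ x ∂μ, (W x).PosDef) :
    (∀ T : Matrix (Fin N) (Fin N) ℂ,
        (∀ᵐ x ∂μ, T * W x = W x * Tᴴ) → (∀ᵐ x ∂μ, Tᴴ * W x = W x * T)) ↔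
      (∀ T : Matrix (Fin N) (Fin N) ℂ,
        (∀ᵐ x ∂μ, T * W x = W x * Tᴴ) ↔ (T = Tᴴ ∧ ∀ᵐ x ∂μ, T * W x = W x * T)) := by
  haveI : (ae μ).NeBot := ae_neBot.mpr hμ
  constructor
  · intro hstar T
    constructor
    · intro hT
      have hT' := hstar T hT
      set S := T - Tᴴ with hSdef
      have hSH : Sᴴ = -S := by
        rw [hSdef, conjTranspose_sub, conjTranspose_conjTranspose, neg_sub]
      have hS : ∀ᵐ x ∂μ, S * W x = W x * Sᴴ := by
        filter_upwards [hT, hT'] with x h1 h2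
        rw [hSdef, hSH, Matrix.sub_mul, h1, h2, Matrix.mul_neg, Matrix.mul_sub, neg_sub]
      obtain ⟨x, hx1, hx2⟩ := (hS.and hWpos).exists
      have hS0 : S = 0 := skew_herm_eq_zero hx2 hSH hx1
      have hTT : T = Tᴴ := by
        have := sub_eq_zero.mp hS0
        exact this
      refine ⟨hTT, ?_⟩
      filter_upwards [hT] with x hx
      rw [hx, ← hTT]
    · rintro ⟨h1, h2⟩
      filter_upwards [h2] with x hx
      rw [← h1]
      exact hx
  · intro h T hT
    obtain ⟨h1, h2⟩ := (h T).mp hT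
    filter_upwards [h2] with x hx
    rw [← h1]
    exact hx
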